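/- (Noiseless data-driven achievability, converse direction.) Let A ∈ ℝ^{n×n}, B ∈ ℝ^{n×m}, 1 ≤ L ≤ T, and let x(0),…,x(T−1) ∈ ℝ^n, u(0),…,u(T−1) ∈ ℝ^m satisfy x(t+1) = A x(t) + B u(t) for 0 ≤ t ≤ T−2. Assume in addition that every pair (ξ, υ) ∈ ℝ^{nL} × ℝ^{mL} whose blocks ξ(0),…,ξ(L−1) ∈ ℝ^n, υ(0),…,υ(L−1) ∈ ℝ^m satisfy ξ(t+1) = A ξ(t) + B υ(t) for 0 ≤ t ≤ L−2 lies in the column space of the stacked matrix [𝓗_L(x); 𝓗_L(u)], i.e. there exists g ∈ ℝ^{T−L+1} with ξ = 𝓗_L(x) g and υ = 𝓗_L(u) g. Then for any Φx0 ∈ ℝ^{nL×n} and Φu0 ∈ ℝ^{mL×n} satisfying (I − Z𝒜) Φx0 − Zℬ Φu0 = E₁, there exists G ∈ ℝ^{(T−L+1)×n} with 𝓗_1(x) G = I_n, 𝓗_L(x) G = Φx0 and 𝓗_L(u) G = Φu0. -/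
import Mathlib


open Matrix

noncomputable section

/-- Block down-shift matrix with `L` blocks of size `n`: identity blocks on the
first block sub-diagonal, zeros elsewhere. -/
def blkShift (n L : ℕ) : Matrix (Fin L × Fin n) (Fin L × Fin n) ℝ :=
  Matrix.of fun p q => if (p.1 : ℕ) = (q.1 : ℕ) + 1 ∧ p.2 = q.2 then 1 else 0

/-- Kronecker product `I_L ⊗ A`, indexed by (block, inner) pairs. -/
def kronId (L : ℕ) {α β : Type} (A : Matrix α β ℝ) :
    Matrix (Fin L × α) (Fin L × β) ℝ :=
  Matrix.of fun p q => if p.1 = q.1 then A p.2 q.2 else 0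

/-- Block-lower-triangular: the (i,j) block vanishes for j > i. -/
def BlockLT {α β : Type} {L : ℕ} (M : Matrix (Fin L × α) (Fin L × β) ℝ) : Prop :=
  ∀ p q, (p.1 : ℕ) < (q.1 : ℕ) → M p q = 0

/-- Strictly block-lower-triangular: the (i,j) block vanishes for j ≥ i. -/
def StrictBlockLT {α β : Type} {L : ℕ} (M : Matrix (Fin L × α) (Fin L × β) ℝ) : Prop :=
  ∀ p q, (p.1 : ℕ) ≤ (q.1 : ℕ) → M p q = 0

/-- Block-Hankel matrix of order `L` of the signal `σ`. -/
def hankelMat (L : ℕ) {T p : ℕ} (σ : Fin T → Fin p → ℝ) :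
    Matrix (Fin L × Fin p) (Fin (T - L + 1)) ℝ :=
  Matrix.of fun q j => if h : (q.1 : ℕ) + (j : ℕ) < T then σ ⟨(q.1 : ℕ) + (j : ℕ), h⟩ q.2 else 0

/-- First block row `𝓗₁(σ) = [σ(0) ⋯ σ(T−L)]` of the block-Hankel matrix of order `L`. -/
def hankelRow (L : ℕ) {T p : ℕ} (σ : Fin T → Fin p → ℝ) :
    Matrix (Fin p) (Fin (T - L + 1)) ℝ :=
  Matrix.of fun a j => if h : (j : ℕ) < T then σ ⟨j, h⟩ a else 0

/-- `E₁ ∈ ℝ^{nL×n}`: first block is `I_n`, remaining blocks zero. -/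
def E1 (n L : ℕ) : Matrix (Fin L × Fin n) (Fin n) ℝ :=
  Matrix.of fun p b => if (p.1 : ℕ) = 0 ∧ p.2 = b then 1 else 0

/-- `𝒵_L = [I  Z  Z² ⋯ Z^{L−1}]`. -/
def zcat (n L : ℕ) : Matrix (Fin L × Fin n) (Fin L × (Fin L × Fin n)) ℝ :=
  Matrix.of fun p kq => (blkShift n L ^ (kq.1 : ℕ)) p kq.2

/-- Spectral norm (ℓ₂ → ℓ₂ operator norm) of a real matrix. -/
def specNorm {α β : Type} [Fintype α] [Fintype β] [DecidableEq β] (M : Matrix α β ℝ) : ℝ :=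
  ‖(Matrix.toEuclideanLin M).toContinuousLinearMap‖

/-- Frobenius norm of a real matrix. -/
def frobNorm {α β : Type} [Fintype α] [Fintype β] (M : Matrix α β ℝ) : ℝ :=
  Real.sqrt (∑ i, ∑ j, (M i j) ^ 2)


set_option linter.unusedSectionVars false
section Aux
variable {n L : ℕ} {γ : Type} [Fintype γ]

lemma blkShift_mul_apply_zero (X : Matrix (Fin L × Fin n) γ ℝ) (h0 : 0 < L)
    (a : Fin n) (c : γ) : (blkShift n L * X) (⟨0, h0⟩, a) c = 0 := by
  simp only [Matrix.mul_apply, blkShift, Matrix.of_apply]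
  apply Finset.sum_eq_zero
  intro q _
  simp

lemma blkShift_mul_apply_succ (X : Matrix (Fin L × Fin n) γ ℝ) (t : ℕ) (ht : t + 1 < L)
    (a : Fin n) (c : γ) :
    (blkShift n L * X) (⟨t + 1, ht⟩, a) c = X (⟨t, Nat.lt_of_succ_lt ht⟩, a) c := by
  simp only [Matrix.mul_apply, blkShift, Matrix.of_apply]
  rw [Finset.sum_eq_single ((⟨t, Nat.lt_of_succ_lt ht⟩ : Fin L), a)]
  · simp
  · intro q _ hq
    rw [if_neg, zero_mul]
    rintro ⟨h1, h2⟩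
    apply hq
    ext
    · show (q.1 : ℕ) = t
      omega
    · exact congrArg Fin.val h2.symm
  · intro h; exact absurd (Finset.mem_univ _) h

lemma kronId_mul_apply {p q : ℕ} (A' : Matrix (Fin p) (Fin q) ℝ)
    (M : Matrix (Fin L × Fin q) γ ℝ) (k : Fin L) (a : Fin p) (c : γ) :
    (kronId L A' * M) (k, a) c = ∑ b, A' a b * M (k, b) c := by
  simp only [Matrix.mul_apply, kronId, Matrix.of_apply]
  rw [Fintype.sum_prod_type]
  rw [Finset.sum_eq_single k]
  · simp
  · intro j _ hj
    apply Finset.sum_eq_zero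
    intro b _
    rw [if_neg (fun h => hj h.symm), zero_mul]
  · intro h; exact absurd (Finset.mem_univ _) h

end Aux

/-- Noiseless data-driven achievability, converse direction. -/
theorem stmt3 {n m L T : ℕ} (hL : 1 ≤ L) (hLT : L ≤ T)
    (A : Matrix (Fin n) (Fin n) ℝ) (B : Matrix (Fin n) (Fin m) ℝ)
    (x : Fin T → Fin n → ℝ) (u : Fin T → Fin m → ℝ)
    (hdyn : ∀ (t : ℕ) (ht : t + 1 < T),
      x ⟨t + 1, ht⟩ = A *ᵥ x ⟨t, Nat.lt_of_succ_lt ht⟩ + B *ᵥ u ⟨t, Nat.lt_of_succ_lt ht⟩)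
    (hspan : ∀ (xi : Fin L × Fin n → ℝ) (up : Fin L × Fin m → ℝ),
      (∀ (t : ℕ) (ht : t + 1 < L) (a : Fin n),
        xi (⟨t + 1, ht⟩, a) =
          (∑ b, A a b * xi (⟨t, Nat.lt_of_succ_lt ht⟩, b)) +
          (∑ b, B a b * up (⟨t, Nat.lt_of_succ_lt ht⟩, b))) →
      ∃ g : Fin (T - L + 1) → ℝ, xi = hankelMat L x *ᵥ g ∧ up = hankelMat L u *ᵥ g) :
    ∀ (Phix0 : Matrix (Fin L × Fin n) (Fin n) ℝ) (Phiu0 : Matrix (Fin L × Fin m) (Fin n) ℝ),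
      (1 - blkShift n L * kronId L A) * Phix0 - (blkShift n L * kronId L B) * Phiu0 = E1 n L →
      ∃ G : Matrix (Fin (T - L + 1)) (Fin n) ℝ,
        hankelRow L x * G = 1 ∧ hankelMat L x * G = Phix0 ∧ hankelMat L u * G = Phiu0 := by
  intro Phix0 Phiu0 hcon
  have hL0 : 0 < L := hL
  have hent : ∀ (p : Fin L × Fin n) (c : Fin n),
      Phix0 p c - (blkShift n L * kronId L A * Phix0) p c
        - (blkShift n L * kronId L B * Phiu0) p c = E1 n L p c := by
    intro p c
    have := congrFun (congrFun hcon p) c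
    simpa [Matrix.sub_apply, Matrix.sub_mul, Matrix.one_mul, Matrix.mul_assoc] using this
  have hrec : ∀ (c : Fin n) (t : ℕ) (ht : t + 1 < L) (a : Fin n),
      Phix0 (⟨t + 1, ht⟩, a) c =
        (∑ b, A a b * Phix0 (⟨t, Nat.lt_of_succ_lt ht⟩, b) c) +
        (∑ b, B a b * Phiu0 (⟨t, Nat.lt_of_succ_lt ht⟩, b) c) := by
    intro c t ht a
    have h := hent (⟨t + 1, ht⟩, a) c
    rw [Matrix.mul_assoc, Matrix.mul_assoc] at h
    rw [blkShift_mul_apply_succ, blkShift_mul_apply_succ, kronId_mul_apply,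
      kronId_mul_apply] at h
    have hE : E1 n L (⟨t + 1, ht⟩, a) c = 0 := by simp [E1]
    rw [hE] at h
    linarith
  have hfirst : ∀ (a c : Fin n),
      Phix0 (⟨0, hL0⟩, a) c = if a = c then 1 else 0 := by
    intro a c
    have h := hent (⟨0, hL0⟩, a) c
    rw [Matrix.mul_assoc, Matrix.mul_assoc] at h
    rw [blkShift_mul_apply_zero, blkShift_mul_apply_zero] at h
    have hE : E1 n L (⟨0, hL0⟩, a) c = if a = c then 1 else 0 := by simp [E1]
    rw [hE] at h
    linarith [h]
  have key : ∀ c : Fin n, ∃ g : Fin (T - L + 1) → ℝ,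
      (fun p => Phix0 p c) = hankelMat L x *ᵥ g ∧
      (fun p => Phiu0 p c) = hankelMat L u *ᵥ g := by
    intro c
    exact hspan (fun p => Phix0 p c) (fun p => Phiu0 p c) (hrec c)
  choose g hgx hgu using key
  refine ⟨Matrix.of fun j c => g c j, ?_, ?_, ?_⟩
  · ext a c
    have h1 : (hankelMat L x *ᵥ g c) (⟨0, hL0⟩, a) = Phix0 (⟨0, hL0⟩, a) c :=
      (congrFun (hgx c) (⟨0, hL0⟩, a)).symm
    have h2 : (hankelRow L x * Matrix.of fun j c => g c j) a c
        = (hankelMat L x *ᵥ g c) (⟨0, hL0⟩, a) := by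
      simp only [Matrix.mul_apply, Matrix.mulVec, dotProduct, hankelRow, hankelMat,
        Matrix.of_apply]
      apply Finset.sum_congr rfl
      intro j _
      have hj : (j : ℕ) < T := by omega
      have hj' : (0 : ℕ) + (j : ℕ) < T := by omega
      simp only [Nat.zero_add]
    rw [h2, h1, hfirst]
    simp [Matrix.one_apply]
  · ext p c
    have h1 : (hankelMat L x *ᵥ g c) p = Phix0 p c := (congrFun (hgx c) p).symm
    rw [← h1]
    simp [Matrix.mul_apply, Matrix.mulVec, dotProduct]
  · ext p c
    have h1 : (hankelMat L u *ᵥ g c) p = Phiu0 p c := (congrFun (hgu c) p).symm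
    rw [← h1]
    simp [Matrix.mul_apply, Matrix.mulVec, dotProduct]

end
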